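/- Let F ⊆ I_uf and let Θ ⊆ ℤ^I satisfy Θ + f_i ⊆ Θ for all i ∈ I. Let S = {s_g : g∈Θ} be a Θ-pointed family satisfying the factorization property in the direction F: for every j ∈ F and every g ∈ Θ, x_j · frz_{F,g}(s_g) = frz_{F,g+f_j}(s_{g+f_j}). Then for every g ∈ Θ and every tuple (d_j)_{j∈F} of natural numbers such that supp s_{g+Σ_{j∈F} d_j f_j} ∩ F = ∅, one has x^{−Σ_{j∈F} d_j f_j} · s_{g+Σ_{j∈F} d_j f_j} = frz_{F,g}(s_g); in particular the left-hand side is independent of the choice of (d_j)_{j∈F}. -/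

import Mathlib

/-! Common setup. -/

noncomputable section

namespace CAFreeze

variable {I : Type*} [Fintype I] [DecidableEq I]

/-- The Laurent polynomial ring LP = ℤ[x_i^{±1} : i ∈ I], modeled as the group algebra of
ℤ^I over ℤ. -/
abbrev LP (I : Type*) := AddMonoidAlgebra ℤ (I → ℤ)

/-- The monomial x^m for an exponent vector m ∈ ℤ^I. -/
def mono (m : I → ℤ) : LP I := AddMonoidAlgebra.ofCoeff (Finsupp.single m 1)

/-- The coefficient of the monomial x^m in z ∈ LP. -/
def coeff (z : LP I) (m : I → ℤ) : ℤ := (z.coeff : (I → ℤ) →₀ ℤ) m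

variable (Iuf : Finset I) (Bt : I → {i // i ∈ Iuf} → ℤ)

/-- The linear map p* : ℤ^{I_uf} → ℤ^I, p*(n) = B̃·n. -/
def pstar (n : {i // i ∈ Iuf} → ℤ) : I → ℤ := fun i => ∑ kk : {i // i ∈ Iuf}, Bt i kk * n kk

/-- p*(n) for n ∈ ℕ^{I_uf}. -/
def pstarN (n : {i // i ∈ Iuf} → ℕ) : I → ℤ := pstar Iuf Bt fun kk => (n kk : ℤ)

/-- supp n = {k ∈ I_uf : n_k ≠ 0}, as a subset of I. -/
def suppn (n : {i // i ∈ Iuf} → ℕ) : Set I := {i | ∃ h : i ∈ Iuf, n ⟨i, h⟩ ≠ 0}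

/-- LP_{⪯m}: the ℤ-submodule of LP spanned by the monomials x^{m+p*(n)}, n ∈ ℕ^{I_uf}. -/
def LPle (m : I → ℤ) : Submodule ℤ (LP I) :=
  Submodule.span ℤ {z : LP I | ∃ n : {i // i ∈ Iuf} → ℕ, z = mono (m + pstarN Iuf Bt n)}

open Classical in
/-- The freezing operator frz_{F,m}: it keeps the monomials x^{m+p*(n)} with
supp n ∩ F = ∅ and kills the monomials x^{m+p*(n)} with supp n ∩ F ≠ ∅. -/
def frz (F : Finset I) (m : I → ℤ) (z : LP I) : LP I :=
  AddMonoidAlgebra.ofCoeff (Finsupp.filter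
    (fun e => ∃ n : {i // i ∈ Iuf} → ℕ, e = m + pstarN Iuf Bt n ∧ suppn Iuf n ∩ (F : Set I) = ∅) z.coeff)

/-- z ∈ LP is pointed at g: z = Σ_{n ∈ ℕ^{I_uf}} c_n x^{g+p*(n)} with c_0 = 1. -/
def Pointed (g : I → ℤ) (z : LP I) : Prop :=
  coeff z g = 1 ∧
    ∀ e ∈ (z.coeff : (I → ℤ) →₀ ℤ).support, ∃ n : {i // i ∈ Iuf} → ℕ, e = g + pstarN Iuf Bt n

/-- supp z = ∪_{c_n ≠ 0} supp n, for a g-pointed z = Σ_n c_n x^{g+p*(n)}. -/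
def suppz (g : I → ℤ) (z : LP I) : Set I :=
  ⋃ n ∈ {n : {i // i ∈ Iuf} → ℕ | coeff z (g + pstarN Iuf Bt n) ≠ 0}, suppn Iuf n

/-- suppDim z ∈ ℕ^{I_uf}: the coordinatewise maximum of {n : c_n ≠ 0}, for a g-pointed
z = Σ_n c_n x^{g+p*(n)}. -/
def suppDim (g : I → ℤ) (z : LP I) : {i // i ∈ Iuf} → ℕ :=
  fun kk => sSup {d : ℕ | ∃ n : {i // i ∈ Iuf} → ℕ, coeff z (g + pstarN Iuf Bt n) ≠ 0 ∧ n kk = d}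

lemma mono_mul_mono (a b : I → ℤ) : mono a * mono b = mono (a + b) := by
  simp [mono, AddMonoidAlgebra.ofCoeff_single, AddMonoidAlgebra.single_mul_single]

lemma mono_zero_eq_one : (mono (0 : I → ℤ) : LP I) = 1 :=
  (AddMonoidAlgebra.one_def).symm

lemma theta_add_nat (Θ : Set (I → ℤ)) (hΘ : ∀ i : I, ∀ g ∈ Θ, g + Pi.single i (1 : ℤ) ∈ Θ) :
    ∀ N : ℕ, ∀ c : I → ℕ, (∑ i, c i) = N → ∀ g ∈ Θ, (g + fun i => (c i : ℤ)) ∈ Θ := by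
  intro N
  induction N with
  | zero =>
    intro c hc g hg
    have hc0 : ∀ i, c i = 0 := fun i =>
      Finset.sum_eq_zero_iff.mp hc i (Finset.mem_univ i)
    have : (fun i => (c i : ℤ)) = 0 := by funext i; simp [hc0 i]
    simpa [this] using hg
  | succ N ih =>
    intro c hc g hg
    have hex : ∃ j, c j ≠ 0 := by
      by_contra h
      push_neg at h
      simp [h] at hc
    obtain ⟨j, hj⟩ := hex
    have hj1 : 1 ≤ c j := Nat.one_le_iff_ne_zero.mpr hj
    set c' : I → ℕ := Function.update c j (c j - 1) with hc'
    have hsum : (∑ i, c' i) = N := by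
      have h1 : (∑ i, c' i) = (c j - 1) + ∑ i ∈ Finset.univ \ {j}, c i := by
        rw [hc']; exact Finset.sum_update_of_mem (Finset.mem_univ j) c (c j - 1)
      have h2 : c j + ∑ i ∈ Finset.univ \ {j}, c i = N + 1 := by
        rw [← Finset.erase_eq, Finset.add_sum_erase _ c (Finset.mem_univ j)]; exact hc
      omega
    have hkey : (fun i => (c i : ℤ)) = (fun i => (c' i : ℤ)) + Pi.single j 1 := by
      funext i
      by_cases hij : i = j
      · subst hij
        simp [hc', Function.update_self, Pi.single_apply]
        push_cast [Nat.cast_sub hj1]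
        ring
      · simp [hc', Function.update_of_ne hij, Pi.single_apply, hij]
    have : (g + fun i => (c i : ℤ)) = (g + fun i => (c' i : ℤ)) + Pi.single j 1 := by
      rw [hkey]; funext i; simp; ring
    rw [this]
    exact hΘ j _ (ih c' hsum g hg)

lemma frz_eq_self (F : Finset I) (g : I → ℤ) (z : LP I)
    (hz : Pointed Iuf Bt g z) (hsupp : suppz Iuf Bt g z ∩ (F : Set I) = ∅) :
    frz Iuf Bt F g z = z := by
  classical
  ext e
  rw [frz, AddMonoidAlgebra.coeff_ofCoeff, Finsupp.filter_apply]
  split_ifs with h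
  · rfl
  · by_contra hne
    have hze : (z.coeff : (I → ℤ) →₀ ℤ) e ≠ 0 := fun h0 => hne h0.symm
    obtain ⟨n, hn⟩ := hz.2 e (Finsupp.mem_support_iff.mpr hze)
    apply h
    refine ⟨n, hn, ?_⟩
    rw [Set.eq_empty_iff_forall_notMem]
    intro x hx
    have hx1 : x ∈ suppz Iuf Bt g z := by
      refine Set.mem_biUnion ?_ hx.1
      show coeff z (g + pstarN Iuf Bt n) ≠ 0
      rwa [coeff, ← hn]
    have : x ∈ suppz Iuf Bt g z ∩ (F : Set I) := ⟨hx1, hx.2⟩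
    rw [hsupp] at this
    exact this

lemma frz_shift (F : Finset I) (Θ : Set (I → ℤ))
    (hΘ : ∀ i : I, ∀ g ∈ Θ, g + Pi.single i (1 : ℤ) ∈ Θ)
    (s : (I → ℤ) → LP I)
    (hfact : ∀ j ∈ F, ∀ g ∈ Θ, mono (Pi.single j (1 : ℤ)) * frz Iuf Bt F g (s g) =
      frz Iuf Bt F (g + Pi.single j (1 : ℤ)) (s (g + Pi.single j (1 : ℤ)))) :
    ∀ N : ℕ, ∀ d : I → ℕ, (∑ j ∈ F, d j) = N → ∀ g ∈ Θ,
      mono (fun i => if i ∈ F then (d i : ℤ) else 0) * frz Iuf Bt F g (s g) =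
      frz Iuf Bt F (g + fun i => if i ∈ F then (d i : ℤ) else 0)
        (s (g + fun i => if i ∈ F then (d i : ℤ) else 0)) := by
  classical
  intro N
  induction N with
  | zero =>
    intro d hd g hg
    have h0 : (fun i => if i ∈ F then (d i : ℤ) else 0) = 0 := by
      funext i
      by_cases hi : i ∈ F
      · simp [hi, Finset.sum_eq_zero_iff.mp hd i hi]
      · simp [hi]
    rw [h0]
    simp [mono_zero_eq_one]
  | succ N ih =>
    intro d hd g hg
    have hex : ∃ j ∈ F, d j ≠ 0 := by
      by_contra h
      push_neg at h
      rw [Finset.sum_eq_zero h] at hd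
      exact Nat.succ_ne_zero N hd.symm
    obtain ⟨j, hjF, hj⟩ := hex
    have hj1 : 1 ≤ d j := Nat.one_le_iff_ne_zero.mpr hj
    set d' : I → ℕ := Function.update d j (d j - 1) with hd'
    have hsum : (∑ i ∈ F, d' i) = N := by
      have h1 : (∑ i ∈ F, d' i) = (d j - 1) + ∑ i ∈ F \ {j}, d i := by
        rw [hd']; exact Finset.sum_update_of_mem hjF d (d j - 1)
      have h2 : d j + ∑ i ∈ F \ {j}, d i = N + 1 := by
        rw [← Finset.erase_eq, Finset.add_sum_erase _ d hjF]; exact hd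
      omega
    have hkey : (fun i => if i ∈ F then (d i : ℤ) else 0) =
        Pi.single j 1 + fun i => if i ∈ F then (d' i : ℤ) else 0 := by
      funext i
      by_cases hij : i = j
      · subst hij
        simp [hjF, hd', Function.update_self, Pi.single_apply]
        push_cast [Nat.cast_sub hj1]
        ring
      · simp [hd', Function.update_of_ne hij, Pi.single_apply, hij]
    have hmem : (g + fun i => if i ∈ F then (d' i : ℤ) else 0) ∈ Θ := by
      have hcast : (fun i => (((if i ∈ F then d' i else 0 : ℕ)) : ℤ)) =
          (fun i => if i ∈ F then (d' i : ℤ) else 0) := by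
        funext i; by_cases h : i ∈ F <;> simp [h]
      have := theta_add_nat Θ hΘ (∑ i, if i ∈ F then d' i else 0)
        (fun i => if i ∈ F then d' i else 0) rfl g hg
      rwa [hcast] at this
    calc mono (fun i => if i ∈ F then (d i : ℤ) else 0) * frz Iuf Bt F g (s g)
        = mono (Pi.single j 1) *
          (mono (fun i => if i ∈ F then (d' i : ℤ) else 0) * frz Iuf Bt F g (s g)) := by
          rw [← mul_assoc, mono_mul_mono, hkey]
      _ = mono (Pi.single j 1) *
          frz Iuf Bt F (g + fun i => if i ∈ F then (d' i : ℤ) else 0)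
            (s (g + fun i => if i ∈ F then (d' i : ℤ) else 0)) := by
          rw [ih d' hsum g hg]
      _ = frz Iuf Bt F (g + fun i => if i ∈ F then (d i : ℤ) else 0)
            (s (g + fun i => if i ∈ F then (d i : ℤ) else 0)) := by
          have hgg : (g + fun i => if i ∈ F then (d' i : ℤ) else 0) + Pi.single j 1 =
              g + fun i => if i ∈ F then (d i : ℤ) else 0 := by
            rw [hkey]; funext i; simp; ring
          rw [hfact j hjF _ hmem, hgg]

/-!
STATEMENT 17: Let F ⊆ I_uf and let Θ ⊆ ℤ^I satisfy Θ + f_i ⊆ Θ for all i ∈ I. Let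
S = {s_g : g∈Θ} be a Θ-pointed family satisfying the factorization property in the
direction F: for every j ∈ F and every g ∈ Θ, x_j · frz_{F,g}(s_g) = frz_{F,g+f_j}(s_{g+f_j}).
Then for every g ∈ Θ and every tuple (d_j)_{j∈F} of natural numbers such that
supp s_{g+Σ_{j∈F} d_j f_j} ∩ F = ∅, one has
x^{−Σ_{j∈F} d_j f_j} · s_{g+Σ_{j∈F} d_j f_j} = frz_{F,g}(s_g); in particular the left-hand
side is independent of the choice of (d_j)_{j∈F}.
-/
theorem localized_function_eq_frz (hfull : Function.Injective (pstar Iuf Bt))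
    (F : Finset I) (hF : F ⊆ Iuf)
    (Θ : Set (I → ℤ)) (hΘ : ∀ i : I, ∀ g ∈ Θ, g + Pi.single i (1 : ℤ) ∈ Θ)
    (s : (I → ℤ) → LP I) (hs : ∀ g ∈ Θ, Pointed Iuf Bt g (s g))
    -- the factorization property in the direction F
    (hfact : ∀ j ∈ F, ∀ g ∈ Θ, mono (Pi.single j (1 : ℤ)) * frz Iuf Bt F g (s g) =
      frz Iuf Bt F (g + Pi.single j (1 : ℤ)) (s (g + Pi.single j (1 : ℤ)))) :
    ∀ g ∈ Θ, ∀ d : I → ℕ,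
      -- the shift vector Σ_{j∈F} d_j f_j ∈ ℤ^I
      ∀ m : I → ℤ, m = (fun i => if i ∈ F then (d i : ℤ) else 0) →
      suppz Iuf Bt (g + m) (s (g + m)) ∩ (F : Set I) = ∅ →
      mono (-m) * s (g + m) = frz Iuf Bt F g (s g) := by
  classical
  intro g hg d m hm hsupp
  subst hm
  set m : I → ℤ := fun i => if i ∈ F then (d i : ℤ) else 0 with hmdef
  have hmem : g + m ∈ Θ := by
    have hcast : (fun i => (((if i ∈ F then d i else 0 : ℕ)) : ℤ)) = m := by
      funext i; rw [hmdef]; by_cases h : i ∈ F <;> simp [h]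
    have := theta_add_nat Θ hΘ (∑ i, if i ∈ F then d i else 0)
      (fun i => if i ∈ F then d i else 0) rfl g hg
    rwa [hcast] at this
  have h1 : frz Iuf Bt F (g + m) (s (g + m)) = s (g + m) :=
    frz_eq_self Iuf Bt F (g + m) (s (g + m)) (hs _ hmem) hsupp
  have h2 : mono m * frz Iuf Bt F g (s g) = frz Iuf Bt F (g + m) (s (g + m)) :=
    frz_shift Iuf Bt F Θ hΘ s hfact (∑ j ∈ F, d j) d rfl g hg
  rw [← h1, ← h2, ← mul_assoc, mono_mul_mono]
  simp [mono_zero_eq_one]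

end CAFreeze
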